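/- Let A and B be ω-categorical homogeneous relational structures in finite relational languages with countably infinite domains Ω and Ω′, and assume the canonisation property (which holds when A and B are Ramsey structures): for every function f: Ω → Ω′, the closure of {β∘f∘α : α ∈ Aut(A), β ∈ Aut(B)} in the topology of pointwise convergence contains an (A,B)-canonical function, and symmetrically for every function g: Ω′ → Ω the closure of {α∘g∘β : α ∈ Aut(A), β ∈ Aut(B)} contains a (B,A)-canonical function. Let C and D be first-order reducts of A and B in the same relational signature, with C optimally presented over A and D optimally presented over B. If C and D are homomorphically equivalent, then there exists a bijection θ: Ω → Ω′ that is an isomorphism from C onto D and a fo-bi-definition of A and B (θ and θ⁻¹ map sets first-order definable without parameters onto sets first-order definable without parameters). -/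

import Mathlib

/-- The topology of pointwise convergence on functions `α → β`
(product topology with `β` discrete). -/
def FnTop (α β : Type*) : TopologicalSpace (α → β) :=
  @Pi.topologicalSpace α (fun _ => β) (fun _ => ⊥)

/-- The coordinatewise action of a permutation on tuples. -/
def tAct {Ω : Type*} (g : Equiv.Perm Ω) {n : ℕ} (u : Fin n → Ω) : Fin n → Ω :=
  fun i => g (u i)

/-- The action of a permutation on sets of tuples. -/
def sAct {Ω : Type*} (g : Equiv.Perm Ω) {n : ℕ} (c : Set (Fin n → Ω)) : Set (Fin n → Ω) :=
  tAct g '' c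

/-- A set of permutations is oligomorphic if for every `n` its coordinatewise
action on `n`-tuples has finitely many orbits. -/
def Oligo {Ω : Type*} (G : Set (Equiv.Perm Ω)) : Prop :=
  ∀ n : ℕ, Set.Finite {o : Set (Fin n → Ω) | ∃ t : Fin n → Ω, o = {s | ∃ g ∈ G, s = tAct g t}}

/-- `G` acts without algebraicity on `Ω`: if the orbit of `a` under the pointwise
stabiliser of a finite tuple `y` is finite, then `a` is an entry of `y`. -/
def NoAlg {Ω : Type*} (G : Set (Equiv.Perm Ω)) : Prop :=
  ∀ (m : ℕ) (y : Fin m → Ω) (a : Ω),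
    Set.Finite {b : Ω | ∃ g ∈ G, (∀ i, g (y i) = y i) ∧ b = g a} → ∃ i, a = y i

/-- `G` is topologically closed in the space of permutations with the topology of
pointwise convergence. -/
def TopClosedPerm {Ω : Type*} (G : Set (Equiv.Perm Ω)) : Prop :=
  @IsClosed (Ω → Ω) (FnTop Ω Ω) {f | ∃ g ∈ G, f = ⇑g}

/-- The `r`-equivalence class of a tuple `u ∈ U`. -/
def cls {Ω : Type*} {n : ℕ} (U : Set (Fin n → Ω))
    (r : (Fin n → Ω) → (Fin n → Ω) → Prop) (u : Fin n → Ω) : Set (Fin n → Ω) :=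
  {v ∈ U | r u v}

/-- The quotient `B = U/∼`, realised as the set of equivalence classes. -/
def classes {Ω : Type*} {n : ℕ} (U : Set (Fin n → Ω))
    (r : (Fin n → Ω) → (Fin n → Ω) → Prop) : Set (Set (Fin n → Ω)) :=
  {c | ∃ u ∈ U, c = cls U r u}

/-- `a` entangles the class `c` if `a` is an entry of every tuple in `c`. -/
def Entangles {Ω : Type*} {n : ℕ} (a : Ω) (c : Set (Fin n → Ω)) : Prop :=
  ∀ v ∈ c, ∃ i, v i = a

/-- `a` strongly entangles `c ∈ B` if it entangles `c` and no other element of `B`. -/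
def StronglyEntangles {Ω : Type*} {n : ℕ} (B : Set (Set (Fin n → Ω))) (a : Ω)
    (c : Set (Fin n → Ω)) : Prop :=
  Entangles a c ∧ ∀ c' ∈ B, Entangles a c' → c' = c

/-- `a` is algebraic over `c`: the orbit of `a` under the stabiliser `G_c` is finite. -/
def AlgebraicOver {Ω : Type*} {n : ℕ} (G : Set (Equiv.Perm Ω)) (a : Ω)
    (c : Set (Fin n → Ω)) : Prop :=
  Set.Finite {b : Ω | ∃ g ∈ G, sAct g c = c ∧ b = g a}

/-- `B` is dense: for every `a ∈ Ω` there are `c₁,…,c_k ∈ B` whose joint stabiliser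
is contained in the stabiliser of `a`. -/
def DenseClasses {Ω : Type*} {n : ℕ} (G : Set (Equiv.Perm Ω))
    (B : Set (Set (Fin n → Ω))) : Prop :=
  ∀ a : Ω, ∃ (k : ℕ) (cc : Fin k → Set (Fin n → Ω)),
    (∀ i, cc i ∈ B) ∧ ∀ g ∈ G, (∀ i, sAct g (cc i) = cc i) → g a = a

/-- The induced action of `G` on `B` is without algebraicity. -/
def NoAlgOn {Ω : Type*} {n : ℕ} (G : Set (Equiv.Perm Ω))
    (B : Set (Set (Fin n → Ω))) : Prop :=
  ∀ (m : ℕ) (cc : Fin m → Set (Fin n → Ω)) (c : Set (Fin n → Ω)),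
    (∀ i, cc i ∈ B) → c ∈ B →
    Set.Finite {c' | ∃ g ∈ G, (∀ i, sAct g (cc i) = cc i) ∧ c' = sAct g c} →
    ∃ i, c = cc i

open FirstOrder Language Structure in
/-- A permutation is an automorphism of the `L`-structure `Ω` if it preserves
every relation and its complement. -/
def IsAutPerm (L : FirstOrder.Language) (Ω : Type*) [L.Structure Ω] (g : Equiv.Perm Ω) : Prop :=
  ∀ (n : ℕ) (R : L.Relations n) (t : Fin n → Ω), RelMap R (⇑g ∘ t) ↔ RelMap R t

open FirstOrder Language Structure in
/-- The automorphism group of the `L`-structure `Ω`, as a subgroup of `Equiv.Perm Ω`. -/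
def autGroup (L : FirstOrder.Language) (Ω : Type*) [L.Structure Ω] : Subgroup (Equiv.Perm Ω) where
  carrier := {g | IsAutPerm L Ω g}
  one_mem' := by
    intro n R t
    exact Iff.rfl
  mul_mem' := by
    intro a b ha hb n R t
    have h1 : ⇑(a * b) ∘ t = ⇑a ∘ (⇑b ∘ t) := by
      ext i; simp [Equiv.Perm.mul_apply]
    rw [h1]
    exact (ha n R (⇑b ∘ t)).trans (hb n R t)
  inv_mem' := by
    intro a ha n R t
    have h := ha n R (⇑a⁻¹ ∘ t)
    have h2 : ⇑a ∘ (⇑a⁻¹ ∘ t) = t := by ext i; simp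
    rw [h2] at h
    exact h.symm

/-- The topology of pointwise convergence on the automorphism group. -/
def autTop (L : FirstOrder.Language) (Ω : Type*) [L.Structure Ω] :
    TopologicalSpace (autGroup L Ω) :=
  TopologicalSpace.induced (fun g => ((g : Equiv.Perm Ω) : Ω → Ω)) (FnTop Ω Ω)

/-- A subset of `Ω^n` is first-order definable without parameters in the
`L`-structure `Ω`. -/
def FoDef (L : FirstOrder.Language) (Ω : Type*) [L.Structure Ω] {n : ℕ}
    (s : Set (Fin n → Ω)) : Prop :=
  ∃ φ : L.Formula (Fin n), s = {t | φ.Realize t}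

/-- `t'` lies in the `G`-orbit of `t`. -/
def SameOrb {Ω : Type*} (G : Set (Equiv.Perm Ω)) {m : ℕ} (t t' : Fin m → Ω) : Prop :=
  ∃ g ∈ G, t' = tAct g t

/-- `f` is canonical from the structure with automorphism set `G` to the structure
with automorphism set `H`: it maps `G`-orbits of tuples into `H`-orbits. -/
def Canonical {Ω Ω' : Type*} (G : Set (Equiv.Perm Ω)) (H : Set (Equiv.Perm Ω'))
    (f : Ω → Ω') : Prop :=
  ∀ (m : ℕ) (t t' : Fin m → Ω), SameOrb G t t' →
    SameOrb H (fun i => f (t i)) (fun i => f (t' i))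

open FirstOrder Language Structure in
/-- A structure is homogeneous if every isomorphism between finite induced
substructures extends to an automorphism. -/
def Homog (L : FirstOrder.Language) (Ω : Type*) [L.Structure Ω] : Prop :=
  ∀ (s : Finset Ω) (f : Ω → Ω), Set.InjOn f ↑s →
    (∀ (n : ℕ) (R : L.Relations n) (t : Fin n → Ω), (∀ i, t i ∈ s) →
      (RelMap R t ↔ RelMap R (f ∘ t))) →
    ∃ g : Equiv.Perm Ω, IsAutPerm L Ω g ∧ ∀ x ∈ s, g x = f x

open FirstOrder Language Structure in
/-- Interpretation of a relation symbol in an explicitly given structure. -/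
def relI {τ : FirstOrder.Language} {Ω : Type*} (S : τ.Structure Ω) {m : ℕ}
    (R : τ.Relations m) (t : Fin m → Ω) : Prop :=
  @RelMap τ Ω S m R t

namespace OptPres

variable {Ω : Type*} (G : Subgroup (Equiv.Perm Ω))

lemma tAct_tAct {n : ℕ} (g h : Equiv.Perm Ω) (t : Fin n → Ω) :
    tAct g (tAct h t) = tAct (g * h) t := rfl

lemma sameOrb_refl {n : ℕ} (t : Fin n → Ω) : SameOrb (G : Set _) t t :=
  ⟨1, G.one_mem, by funext i; simp [tAct]⟩

lemma sameOrb_symm {n : ℕ} {t s : Fin n → Ω} (h : SameOrb (G : Set _) t s) :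
    SameOrb (G : Set _) s t := by
  obtain ⟨g, hg, rfl⟩ := h
  exact ⟨g⁻¹, G.inv_mem hg, by funext i; simp [tAct]⟩

lemma sameOrb_trans {n : ℕ} {t s u : Fin n → Ω} (h : SameOrb (G : Set _) t s)
    (h' : SameOrb (G : Set _) s u) : SameOrb (G : Set _) t u := by
  obtain ⟨g, hg, rfl⟩ := h
  obtain ⟨g', hg', rfl⟩ := h'
  exact ⟨g' * g, G.mul_mem hg' hg, rfl⟩

/-- The orbit of a tuple. -/
def Orb {n : ℕ} (t : Fin n → Ω) : Set (Fin n → Ω) := {s | SameOrb (G : Set _) t s}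

lemma orb_eq_of_sameOrb {n : ℕ} {t s : Fin n → Ω} (h : SameOrb (G : Set _) t s) :
    Orb G t = Orb G s := by
  ext u
  exact ⟨fun hu => sameOrb_trans G (sameOrb_symm G h) hu, fun hu => sameOrb_trans G h hu⟩

lemma sameOrb_of_orb_eq {n : ℕ} {t s : Fin n → Ω} (h : Orb G t = Orb G s) :
    SameOrb (G : Set _) t s := by
  have : s ∈ Orb G t := h ▸ sameOrb_refl G s
  exact this

/-- On a finite type, a predicate preserved forward by an injective self-map is
also reflected. -/
lemma finite_pred_reflect {α : Type*} [Finite α] (f : α → α) (hinj : Function.Injective f)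
    (P : α → Prop) (hP : ∀ a, P a → P (f a)) : ∀ a, P (f a) → P a := by
  intro a hfa
  have himg : f '' setOf P ⊆ setOf P := by rintro _ ⟨b, hb, rfl⟩; exact hP b hb
  have heq : f '' setOf P = setOf P :=
    Set.eq_of_subset_of_ncard_le himg (Set.ncard_image_of_injective _ hinj).ge (Set.toFinite _)
  have : f a ∈ f '' setOf P := heq.symm ▸ hfa
  obtain ⟨b, hb, hba⟩ := this
  exact (hinj hba) ▸ hb

/-- The key counting lemma: if the orbit set is finite and `E` maps orbits to
orbits with the induced map surjective, then the induced map is injective and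
reflects invariant predicates. -/
lemma orbit_counting {n : ℕ}
    (hfin : Set.Finite {o : Set (Fin n → Ω) | ∃ t : Fin n → Ω, o = Orb G t})
    (E : (Fin n → Ω) → (Fin n → Ω))
    (hmono : ∀ t s, SameOrb (G : Set _) t s → SameOrb (G : Set _) (E t) (E s))
    (hsurj : ∀ t, ∃ s, SameOrb (G : Set _) t (E s)) :
    (∀ t s, SameOrb (G : Set _) (E t) (E s) → SameOrb (G : Set _) t s) ∧
    (∀ P : (Fin n → Ω) → Prop, (∀ t s, SameOrb (G : Set _) t s → P t → P s) →
      (∀ t, P t → P (E t)) → ∀ t, P (E t) → P t) := by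
  classical
  set O : Set (Set (Fin n → Ω)) := {o | ∃ t : Fin n → Ω, o = Orb G t} with hO
  haveI : Finite ↥O := hfin.to_subtype
  let rep : ↥O → (Fin n → Ω) := fun o => o.2.choose
  have hrep : ∀ o : ↥O, (o : Set (Fin n → Ω)) = Orb G (rep o) := fun o => o.2.choose_spec
  let F : ↥O → ↥O := fun o => ⟨Orb G (E (rep o)), ⟨E (rep o), rfl⟩⟩
  -- value of F on mk
  have hFmk : ∀ t : Fin n → Ω, (F ⟨Orb G t, ⟨t, rfl⟩⟩ : Set (Fin n → Ω)) = Orb G (E t) := by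
    intro t
    have h1 : Orb G t = Orb G (rep ⟨Orb G t, ⟨t, rfl⟩⟩) := hrep ⟨Orb G t, ⟨t, rfl⟩⟩
    have h2 : SameOrb (G : Set _) t (rep ⟨Orb G t, ⟨t, rfl⟩⟩) := sameOrb_of_orb_eq G h1
    exact (orb_eq_of_sameOrb G (hmono _ _ h2)).symm
  have hFsurj : Function.Surjective F := by
    rintro ⟨o, t, rfl⟩
    obtain ⟨s, hs⟩ := hsurj t
    refine ⟨⟨Orb G s, ⟨s, rfl⟩⟩, Subtype.ext ?_⟩
    rw [hFmk s]
    exact (orb_eq_of_sameOrb G hs).symm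
  have hFinj : Function.Injective F := Finite.injective_iff_surjective.mpr hFsurj
  constructor
  · intro t s h
    have : F ⟨Orb G t, ⟨t, rfl⟩⟩ = F ⟨Orb G s, ⟨s, rfl⟩⟩ := by
      apply Subtype.ext
      rw [hFmk t, hFmk s]
      exact orb_eq_of_sameOrb G h
    have := hFinj this
    exact sameOrb_of_orb_eq G (congrArg Subtype.val this)
  · intro P hPinv hPfwd t hPEt
    set Q : ↥O → Prop := fun o => P (rep o) with hQ
    have hQF : ∀ o, Q o → Q (F o) := by
      intro o hQo
      have h1 : (F o : Set (Fin n → Ω)) = Orb G (E (rep o)) := rfl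
      have h2 : Orb G (E (rep o)) = Orb G (rep (F o)) := h1 ▸ hrep (F o)
      exact hPinv _ _ (sameOrb_of_orb_eq G h2) (hPfwd _ hQo)
    have hrefl := finite_pred_reflect F hFinj Q hQF
    set o : ↥O := ⟨Orb G t, ⟨t, rfl⟩⟩ with ho
    have hto : SameOrb (G : Set _) t (rep o) := sameOrb_of_orb_eq G (hrep o)
    have hQFo : Q (F o) := by
      have h2 : Orb G (E t) = Orb G (rep (F o)) := by
        rw [← hFmk t]; exact hrep (F o)
      exact hPinv _ _ (sameOrb_of_orb_eq G h2) hPEt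
    have hQo : Q o := hrefl o hQFo
    exact hPinv _ _ (sameOrb_symm G hto) hQo

end OptPres


open FirstOrder Language Structure

namespace OptPres

/-- Approximation from closure in the topology of pointwise convergence. -/
lemma closure_approx {α β : Type*} {S : Set (α → β)} {f : α → β}
    (hf : f ∈ @closure _ (FnTop α β) S) (m : ℕ) (t : Fin m → α) :
    ∃ h ∈ S, ∀ i, h (t i) = f (t i) := by
  letI : TopologicalSpace β := ⊥
  haveI : DiscreteTopology β := ⟨rfl⟩
  letI : TopologicalSpace (α → β) := Pi.topologicalSpace
  have hf' : f ∈ closure S := hf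
  have hU : IsOpen {g : α → β | ∀ i, g (t i) = f (t i)} := by
    have he : {g : α → β | ∀ i, g (t i) = f (t i)}
        = ⋂ i, (fun g : α → β => g (t i)) ⁻¹' {f (t i)} := by
      ext g; simp
    rw [he]
    exact isOpen_iInter_of_finite fun i =>
      (continuous_apply (t i)).isOpen_preimage _ (isOpen_discrete _)
  obtain ⟨h, hh1, hh2⟩ := mem_closure_iff.1 hf' _ hU (fun i => rfl)
  exact ⟨h, hh2, hh1⟩

variable {L : FirstOrder.Language} {M : Type*} [L.Structure M]

/-- Automorphisms preserve realization of formulas. -/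
lemma realize_comp_aut [L.IsRelational] {g : Equiv.Perm M} (hg : IsAutPerm L M g)
    {α : Type*} (φ : L.Formula α) (t : α → M) : φ.Realize (⇑g ∘ t) ↔ φ.Realize t := by
  let G : M ≃[L] M :=
    { toEquiv := g
      map_fun' := fun {k} F _ => isEmptyElim F
      map_rel' := fun {k} R x => hg k R x }
  exact StrongHomClass.realize_formula G φ

end OptPres

open FirstOrder Language Structure

namespace OptPres

variable {L : FirstOrder.Language} {M : Type*} [L.Structure M]

lemma autSet_eq : {g : Equiv.Perm M | IsAutPerm L M g} = ↑(autGroup L M) := rfl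

lemma orbit_foDef [L.IsRelational] [Finite (Σ k, L.Relations k)]
    (hhomog : Homog L M) {n : ℕ} (t : Fin n → M) :
    (∅ : Set M).Definable L {s | SameOrb {g : Equiv.Perm M | IsAutPerm L M g} t s} := by
  classical
  haveI : ∀ p : (Σ k, L.Relations k), Finite (Fin p.1 → Fin n) := fun p => inferInstance
  set SIG := (Σ p : (Σ k, L.Relations k), (Fin p.1 → Fin n)) with hSIG
  haveI : Finite SIG := inferInstance
  haveI : Fintype SIG := Fintype.ofFinite _
  set Eset : Fin n × Fin n → Set (Fin n → M) := fun p =>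
    if t p.1 = t p.2 then {s | s p.1 = s p.2} else {s | s p.1 = s p.2}ᶜ with hEset
  set Rset : SIG → Set (Fin n → M) := fun q =>
    if RelMap q.1.2 (t ∘ q.2) then {s | RelMap q.1.2 (s ∘ q.2)}
    else {s | RelMap q.1.2 (s ∘ q.2)}ᶜ with hRset
  have hEbase : ∀ i j : Fin n, (∅ : Set M).Definable L {s : Fin n → M | s i = s j} := by
    intro i j
    rw [Set.empty_definable_iff]
    exact ⟨Term.equal (Term.var i) (Term.var j), by ext s; simp [Formula.realize_equal]⟩
  have hRbase : ∀ q : SIG, (∅ : Set M).Definable L {s : Fin n → M | RelMap q.1.2 (s ∘ q.2)} := by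
    intro q
    rw [Set.empty_definable_iff]
    refine ⟨q.1.2.formula (fun k => Term.var (q.2 k)), ?_⟩
    ext s
    rw [Set.mem_setOf_eq, Set.mem_setOf_eq, Formula.realize_rel]
    simp only [Term.realize_var]
    exact Iff.rfl
  have hE : ∀ p : Fin n × Fin n, (∅ : Set M).Definable L (Eset p) := by
    intro p
    rw [hEset]
    by_cases h : t p.1 = t p.2
    · simpa [h] using hEbase p.1 p.2
    · simpa [h] using (hEbase p.1 p.2).compl
  have hR : ∀ q : SIG, (∅ : Set M).Definable L (Rset q) := by
    intro q
    rw [hRset]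
    by_cases h : RelMap q.1.2 (t ∘ q.2)
    · simpa [h] using hRbase q
    · simpa [h] using (hRbase q).compl
  have hset : {s | SameOrb {g : Equiv.Perm M | IsAutPerm L M g} t s}
      = (⋂ p : Fin n × Fin n, Eset p) ∩ ⋂ q : SIG, Rset q := by
    ext s
    constructor
    · rintro ⟨g, hg, rfl⟩
      constructor
      · refine Set.mem_iInter.2 fun p => ?_
        rw [hEset]
        by_cases h : t p.1 = t p.2
        · simp only [if_pos h]
          show g (t p.1) = g (t p.2)
          rw [h]
        · simp only [if_neg h]
          intro hc
          exact h (g.injective hc)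
      · refine Set.mem_iInter.2 fun q => ?_
        rw [hRset]
        have hcomp : (tAct g t) ∘ q.2 = ⇑g ∘ (t ∘ q.2) := rfl
        by_cases h : RelMap q.1.2 (t ∘ q.2)
        · simp only [if_pos h]
          show RelMap q.1.2 ((tAct g t) ∘ q.2)
          rw [hcomp]
          exact (hg _ q.1.2 (t ∘ q.2)).2 h
        · simp only [if_neg h]
          intro hc
          exact h ((hg _ q.1.2 (t ∘ q.2)).1 (by rw [← hcomp]; exact hc))
    · rintro ⟨h1, h2⟩
      have hE' : ∀ i j : Fin n, t i = t j ↔ s i = s j := by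
        intro i j
        have := Set.mem_iInter.1 h1 (i, j)
        rw [hEset] at this
        by_cases h : t i = t j
        · simp only [if_pos h] at this
          exact ⟨fun _ => this, fun _ => h⟩
        · simp only [if_neg h] at this
          exact ⟨fun hc => absurd hc h, fun hc => absurd hc this⟩
      have hR' : ∀ q : SIG, RelMap q.1.2 (t ∘ q.2) ↔ RelMap q.1.2 (s ∘ q.2) := by
        intro q
        have := Set.mem_iInter.1 h2 q
        rw [hRset] at this
        by_cases h : RelMap q.1.2 (t ∘ q.2)
        · simp only [if_pos h] at this
          exact ⟨fun _ => this, fun _ => h⟩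
        · simp only [if_neg h] at this
          exact ⟨fun hc => absurd hc h, fun hc => absurd hc this⟩
      set u : Finset M := Finset.image t Finset.univ with hu
      set f : M → M := fun x => if h : ∃ i, t i = x then s h.choose else x with hf
      have hft : ∀ i, f (t i) = s i := by
        intro i
        have h : ∃ j, t j = t i := ⟨i, rfl⟩
        rw [hf]
        simp only [dif_pos h]
        exact (hE' h.choose i).1 h.choose_spec
      have hmem : ∀ x ∈ u, ∃ i, t i = x := by
        intro x hx
        obtain ⟨i, _, hi⟩ := Finset.mem_image.1 hx
        exact ⟨i, hi⟩
      have hinj : Set.InjOn f ↑u := by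
        intro x hx y hy hxy
        obtain ⟨i, rfl⟩ := hmem x hx
        obtain ⟨j, rfl⟩ := hmem y hy
        rw [hft, hft] at hxy
        exact (hE' i j).2 hxy
      have hrel : ∀ (m : ℕ) (R : L.Relations m) (w : Fin m → M), (∀ k, w k ∈ u) →
          (RelMap R w ↔ RelMap R (f ∘ w)) := by
        intro m R w hw
        have hch : ∀ k, ∃ i, t i = w k := fun k => hmem _ (hw k)
        set ι : Fin m → Fin n := fun k => (hch k).choose with hι
        have hwι : w = t ∘ ι := funext fun k => ((hch k).choose_spec).symm
        have hfw : f ∘ w = s ∘ ι := by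
          funext k
          have : w k = t (ι k) := by rw [hwι]; rfl
          simp only [Function.comp_apply, this, hft]
        rw [hfw, hwι]
        exact hR' ⟨⟨m, R⟩, ι⟩
      obtain ⟨g, hgaut, hgeq⟩ := hhomog u f hinj hrel
      refine ⟨g, hgaut, funext fun i => ?_⟩
      have : g (t i) = f (t i) := hgeq (t i) (Finset.mem_image.2 ⟨i, Finset.mem_univ i, rfl⟩)
      show s i = g (t i)
      rw [this, hft]
  rw [hset]
  have h1 : (⋂ p : Fin n × Fin n, Eset p)
      = ⋂ p ∈ (Finset.univ : Finset (Fin n × Fin n)), Eset p := by simp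
  have h2 : (⋂ q : SIG, Rset q) = ⋂ q ∈ (Finset.univ : Finset SIG), Rset q := by simp
  rw [h1, h2]
  exact (Set.definable_biInter_finset (fun p => hE p) Finset.univ).inter
    (Set.definable_biInter_finset (fun q => hR q) Finset.univ)

end OptPres


open FirstOrder Language Structure

namespace OptPres

variable {L : FirstOrder.Language} {M : Type*} [L.Structure M]

lemma definable_sUnion {n : ℕ} (T : Set (Set (Fin n → M))) (hT : T.Finite) :
    (∀ o ∈ T, (∅ : Set M).Definable L o) → (∅ : Set M).Definable L (⋃₀ T) := by
  refine Set.Finite.induction_on T hT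
    (motive := fun T _ => (∀ o ∈ T, (∅ : Set M).Definable L o) → (∅ : Set M).Definable L (⋃₀ T))
    (fun _ => by simp) ?_
  intro a s _ _ ih h
  rw [Set.sUnion_insert]
  exact (h _ (Set.mem_insert _ _)).union (ih fun o ho => h o (Set.mem_insert_of_mem _ ho))

lemma invariant_foDef [L.IsRelational] [Finite (Σ k, L.Relations k)]
    (hhomog : Homog L M) (holigo : Oligo {g : Equiv.Perm M | IsAutPerm L M g})
    {n : ℕ} (s : Set (Fin n → M))
    (hinv : ∀ u ∈ s, ∀ g : Equiv.Perm M, IsAutPerm L M g → tAct g u ∈ s) :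
    FoDef L M s := by
  classical
  set G := autGroup L M with hG
  set T : Set (Set (Fin n → M)) := {o | ∃ u ∈ s, o = Orb G u} with hT
  have hTsub : T ⊆ {o | ∃ t : Fin n → M, o = {s' | ∃ g ∈ {g : Equiv.Perm M | IsAutPerm L M g}, s' = tAct g t}} := by
    rintro o ⟨u, _, rfl⟩
    exact ⟨u, rfl⟩
  have hTfin : T.Finite := (holigo n).subset hTsub
  have hsU : s = ⋃₀ T := by
    ext v
    constructor
    · intro hv
      exact ⟨Orb G v, ⟨v, hv, rfl⟩, sameOrb_refl G v⟩
    · rintro ⟨o, ⟨u, hu, rfl⟩, hv⟩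
      obtain ⟨g, hg, rfl⟩ := hv
      exact hinv u hu g hg
  have : (∅ : Set M).Definable L s := by
    rw [hsU]
    refine definable_sUnion T hTfin ?_
    rintro o ⟨u, _, rfl⟩
    exact orbit_foDef hhomog u
  exact Set.empty_definable_iff.1 this

end OptPres

namespace OptPres

variable {Ω Ω' : Type*}

/-- Invariant for the back-and-forth construction. -/
def InvL (H : Subgroup (Equiv.Perm Ω')) (f : Ω → Ω') (l : List (Ω × Ω')) : Prop :=
  (l.map Prod.snd).Nodup ∧ ∃ β : Equiv.Perm Ω', β ∈ H ∧ ∀ p ∈ l, p.2 = β (f p.1)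

lemma invL_nil (H : Subgroup (Equiv.Perm Ω')) (f : Ω → Ω') : InvL H f [] :=
  ⟨List.nodup_nil, 1, H.one_mem, by simp⟩

lemma InvL.fst_nodup {H : Subgroup (Equiv.Perm Ω')} {f : Ω → Ω'} {l : List (Ω × Ω')}
    (hf : Function.Injective f) (h : InvL H f l) : (l.map Prod.fst).Nodup := by
  obtain ⟨hnd, β, hβ, hl⟩ := h
  have h1 : l.map Prod.snd = (l.map Prod.fst).map (fun x => β (f x)) := by
    rw [List.map_map]
    exact List.map_congr_left (fun p hp => hl p hp)
  rw [h1] at hnd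
  exact List.Nodup.of_map _ hnd

lemma invL_step_even {H : Subgroup (Equiv.Perm Ω')} {f : Ω → Ω'} (hf : Function.Injective f)
    {l : List (Ω × Ω')} (h : InvL H f l) {a : Ω} (ha : a ∉ l.map Prod.fst) :
    ∃ b, InvL H f (l ++ [(a, b)]) := by
  obtain ⟨hnd, β, hβ, hl⟩ := h
  have hbfresh : β (f a) ∉ l.map Prod.snd := by
    intro hc
    obtain ⟨p, hp, hp2⟩ := List.mem_map.1 hc
    have : f p.1 = f a := β.injective (by rw [← hl p hp, hp2])
    exact ha (List.mem_map.2 ⟨p, hp, hf this⟩)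
  refine ⟨β (f a), ?_, β, hβ, ?_⟩
  · rw [List.map_append, List.nodup_append]
    refine ⟨hnd, List.nodup_singleton _, ?_⟩
    intro c hc d h' hcd
    rw [List.map_singleton, List.mem_singleton] at h'
    rw [hcd, h'] at hc
    exact hbfresh hc
  · intro p hp
    rcases List.mem_append.1 hp with h1 | h1
    · exact hl p h1
    · rw [List.mem_singleton.1 h1]

lemma invL_step_odd {H : Subgroup (Equiv.Perm Ω')} {f : Ω → Ω'} (hf : Function.Injective f)
    (hext : ∀ (n : ℕ) (x : Fin n → Ω) (b : Ω'), ∃ (a : Ω) (γ : Equiv.Perm Ω'), γ ∈ H ∧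
       (∀ i, γ (f (x i)) = f (x i)) ∧ γ b = f a)
    {l : List (Ω × Ω')} (h : InvL H f l) {b : Ω'} (hb : b ∉ l.map Prod.snd) :
    ∃ a, a ∉ l.map Prod.fst ∧ InvL H f (l ++ [(a, b)]) := by
  obtain ⟨hnd, β, hβ, hl⟩ := h
  obtain ⟨a, γ, hγ, hfix, hγb⟩ := hext l.length (fun i => (l.get i).1) (β⁻¹ b)
  have hfix' : ∀ p ∈ l, γ (f p.1) = f p.1 := by
    intro p hp
    obtain ⟨i, hi⟩ := List.mem_iff_get.1 hp
    have := hfix i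
    rwa [hi] at this
  have hfixinv : ∀ p ∈ l, γ⁻¹ (f p.1) = f p.1 := by
    intro p hp
    have := hfix' p hp
    conv_lhs => rw [← this]
    exact γ.symm_apply_apply _
  have hval : (β * γ⁻¹) (f a) = b := by
    have h1 : γ⁻¹ (f a) = β⁻¹ b := by rw [← hγb]; exact γ.symm_apply_apply _
    show β (γ⁻¹ (f a)) = b
    rw [h1]; exact β.apply_symm_apply b
  have hafresh : a ∉ l.map Prod.fst := by
    intro hc
    obtain ⟨p, hp, hp2⟩ := List.mem_map.1 hc
    apply hb
    have h1 : f a = f p.1 := by rw [hp2]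
    have h2 : b = β (f p.1) := by
      rw [← hval]
      show β (γ⁻¹ (f a)) = β (f p.1)
      rw [h1, hfixinv p hp]
    exact List.mem_map.2 ⟨p, hp, by rw [hl p hp]; exact h2.symm⟩
  have hbfresh : b ∉ l.map Prod.snd := hb
  refine ⟨a, hafresh, ?_, β * γ⁻¹, H.mul_mem hβ (H.inv_mem hγ), ?_⟩
  · rw [List.map_append, List.nodup_append]
    refine ⟨hnd, List.nodup_singleton _, ?_⟩
    intro c hc d h' hcd
    rw [List.map_singleton, List.mem_singleton] at h'
    rw [hcd, h'] at hc
    exact hbfresh hc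
  · intro p hp
    rcases List.mem_append.1 hp with h1 | h1
    · rw [hl p h1]
      show β (f p.1) = β (γ⁻¹ (f p.1))
      rw [hfixinv p h1]
    · rw [List.mem_singleton.1 h1]
      exact hval.symm

end OptPres

namespace OptPres

variable {Ω Ω' : Type*}

lemma back_and_forth [Countable Ω] [Infinite Ω] [Countable Ω'] [Infinite Ω']
    (H : Subgroup (Equiv.Perm Ω')) (f : Ω → Ω') (hf : Function.Injective f)
    (hext : ∀ (n : ℕ) (x : Fin n → Ω) (b : Ω'), ∃ (a : Ω) (γ : Equiv.Perm Ω'), γ ∈ H ∧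
       (∀ i, γ (f (x i)) = f (x i)) ∧ γ b = f a) :
    ∃ θ : Ω ≃ Ω', ∀ (n : ℕ) (x : Fin n → Ω), ∃ β ∈ H, ∀ i, θ (x i) = β (f (x i)) := by
  classical
  obtain ⟨dA⟩ := nonempty_denumerable Ω
  obtain ⟨dB⟩ := nonempty_denumerable Ω'
  let eA : ℕ ≃ Ω := (Denumerable.eqv Ω).symm
  let eB : ℕ ≃ Ω' := (Denumerable.eqv Ω').symm
  have hfreshA : ∀ l : List (Ω × Ω'), ∃ m : ℕ, eA m ∉ l.map Prod.fst := by
    intro l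
    obtain ⟨x, hx⟩ := Infinite.exists_notMem_finset (l.map Prod.fst).toFinset
    exact ⟨eA.symm x, by simpa [List.mem_toFinset] using hx⟩
  have hfreshB : ∀ l : List (Ω × Ω'), ∃ m : ℕ, eB m ∉ l.map Prod.snd := by
    intro l
    obtain ⟨y, hy⟩ := Infinite.exists_notMem_finset (l.map Prod.snd).toFinset
    exact ⟨eB.symm y, by simpa [List.mem_toFinset] using hy⟩
  -- the step function
  let next : ℕ → List (Ω × Ω') → List (Ω × Ω') := fun k l =>
    if k % 2 = 0 then
      l ++ [(eA (Nat.find (hfreshA l)),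
        if h : ∃ b, InvL H f (l ++ [(eA (Nat.find (hfreshA l)), b)]) then h.choose
        else f (eA (Nat.find (hfreshA l))))]
    else
      l ++ [((if h : ∃ a, a ∉ l.map Prod.fst ∧ InvL H f (l ++ [(a, eB (Nat.find (hfreshB l)))])
        then h.choose else eA (Nat.find (hfreshA l))), eB (Nat.find (hfreshB l)))]
  let Ls : ℕ → List (Ω × Ω') := fun n => Nat.rec ([] : List (Ω × Ω')) (fun k ih => next k ih) n
  have hLsS : ∀ n, Ls (n + 1) = next n (Ls n) := fun n => rfl
  -- the invariant
  have hInv : ∀ n, InvL H f (Ls n) := by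
    intro n
    induction n with
    | zero => exact invL_nil H f
    | succ k ih =>
      rw [hLsS]
      show InvL H f (next k (Ls k))
      by_cases hk : k % 2 = 0
      · simp only [next, if_pos hk]
        have hane : eA (Nat.find (hfreshA (Ls k))) ∉ (Ls k).map Prod.fst :=
          Nat.find_spec (hfreshA (Ls k))
        have hex : ∃ b, InvL H f (Ls k ++ [(eA (Nat.find (hfreshA (Ls k))), b)]) :=
          invL_step_even hf ih hane
        rw [dif_pos hex]
        exact hex.choose_spec
      · simp only [next, if_neg hk]
        have hbne : eB (Nat.find (hfreshB (Ls k))) ∉ (Ls k).map Prod.snd :=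
          Nat.find_spec (hfreshB (Ls k))
        have hex : ∃ a, a ∉ (Ls k).map Prod.fst ∧
            InvL H f (Ls k ++ [(a, eB (Nat.find (hfreshB (Ls k))))]) :=
          invL_step_odd hf hext ih hbne
        rw [dif_pos hex]
        exact hex.choose_spec.2
  -- each step appends exactly one pair
  have hstep : ∀ n, ∃ p, Ls (n + 1) = Ls n ++ [p] := by
    intro n
    rw [hLsS]
    show ∃ p, next n (Ls n) = Ls n ++ [p]
    by_cases hk : n % 2 = 0
    · simp only [next, if_pos hk]; exact ⟨_, rfl⟩
    · simp only [next, if_neg hk]; exact ⟨_, rfl⟩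
  -- membership is monotone
  have hmono : ∀ (p : Ω × Ω') (n m : ℕ), n ≤ m → p ∈ Ls n → p ∈ Ls m := by
    intro p n m hnm hp
    induction m, hnm using Nat.le_induction with
    | base => exact hp
    | succ k hk ih =>
      obtain ⟨q, hq⟩ := hstep k
      rw [hq]
      exact List.mem_append_left _ ih
  have hmonoF : ∀ (x : Ω) (n m : ℕ), n ≤ m → x ∈ (Ls n).map Prod.fst → x ∈ (Ls m).map Prod.fst := by
    intro x n m hnm hx
    obtain ⟨p, hp, hp2⟩ := List.mem_map.1 hx
    exact List.mem_map.2 ⟨p, hmono p _ _ hnm hp, hp2⟩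
  have hmonoS : ∀ (y : Ω') (n m : ℕ), n ≤ m → y ∈ (Ls n).map Prod.snd → y ∈ (Ls m).map Prod.snd := by
    intro y n m hnm hy
    obtain ⟨p, hp, hp2⟩ := List.mem_map.1 hy
    exact List.mem_map.2 ⟨p, hmono p _ _ hnm hp, hp2⟩
  -- the added pairs at even/odd steps
  have haddE : ∀ k, k % 2 = 0 → eA (Nat.find (hfreshA (Ls k))) ∈ (Ls (k+1)).map Prod.fst := by
    intro k hk
    rw [hLsS]
    show _ ∈ (next k (Ls k)).map Prod.fst
    simp only [next, if_pos hk]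
    rw [List.map_append]
    exact List.mem_append_right _ (by simp)
  have haddO : ∀ k, k % 2 ≠ 0 → eB (Nat.find (hfreshB (Ls k))) ∈ (Ls (k+1)).map Prod.snd := by
    intro k hk
    rw [hLsS]
    show _ ∈ (next k (Ls k)).map Prod.snd
    simp only [next, if_neg hk]
    rw [List.map_append]
    exact List.mem_append_right _ (by simp)
  -- least missing index functions
  set μ : ℕ → ℕ := fun n => Nat.find (hfreshA (Ls n)) with hμ
  set ν : ℕ → ℕ := fun n => Nat.find (hfreshB (Ls n)) with hν
  have hμmem : ∀ n j, j < μ n → eA j ∈ (Ls n).map Prod.fst := by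
    intro n j hj
    have := Nat.find_min (hfreshA (Ls n)) hj
    exact not_not.1 this
  have hνmem : ∀ n j, j < ν n → eB j ∈ (Ls n).map Prod.snd := by
    intro n j hj
    have := Nat.find_min (hfreshB (Ls n)) hj
    exact not_not.1 this
  have hμmono : ∀ (n m), n ≤ m → μ n ≤ μ m := by
    intro n m hnm
    rw [hμ]
    rw [Nat.le_find_iff]
    intro j hj hc
    exact hc (hmonoF _ _ _ hnm (hμmem n j hj))
  have hνmono : ∀ (n m), n ≤ m → ν n ≤ ν m := by
    intro n m hnm
    rw [hν]
    rw [Nat.le_find_iff]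
    intro j hj hc
    exact hc (hmonoS _ _ _ hnm (hνmem n j hj))
  have hμstep : ∀ k, k % 2 = 0 → μ k < μ (k + 1) := by
    intro k hk
    rw [hμ]
    rw [Nat.lt_find_iff]
    intro j hj hc
    rcases Nat.lt_or_ge j (μ k) with h | h
    · exact hc (hmonoF _ _ _ (Nat.le_succ k) (hμmem k j h))
    · have : j = μ k := le_antisymm hj h
      exact hc (this ▸ haddE k hk)
  have hνstep : ∀ k, k % 2 ≠ 0 → ν k < ν (k + 1) := by
    intro k hk
    rw [hν]
    rw [Nat.lt_find_iff]
    intro j hj hc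
    rcases Nat.lt_or_ge j (ν k) with h | h
    · exact hc (hmonoS _ _ _ (Nat.le_succ k) (hνmem k j h))
    · have : j = ν k := le_antisymm hj h
      exact hc (this ▸ haddO k hk)
  clear_value μ ν
  have hμgrow : ∀ m, m ≤ μ (2 * m) := by
    intro m
    induction m with
    | zero => exact Nat.zero_le _
    | succ j ih =>
      have h1 : μ (2 * j) < μ (2 * j + 1) := hμstep (2 * j) (Nat.mul_mod_right 2 j)
      have h2 : μ (2 * j + 1) ≤ μ (2 * j + 2) := hμmono _ _ (by omega)
      have h3 : 2 * (j + 1) = 2 * j + 2 := by ring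
      rw [h3]
      omega
  have hνgrow : ∀ m, m ≤ ν (2 * m + 1) := by
    intro m
    induction m with
    | zero => exact Nat.zero_le _
    | succ j ih =>
      have h1 : ν (2 * j + 1) < ν (2 * j + 2) := hνstep (2 * j + 1) (by omega)
      have h2 : ν (2 * j + 2) ≤ ν (2 * j + 3) := hνmono _ _ (by omega)
      have h3 : 2 * (j + 1) + 1 = 2 * j + 3 := by ring
      rw [h3]
      omega
  -- totality
  have htotA : ∀ x : Ω, ∃ q : ℕ × Ω', (x, q.2) ∈ Ls q.1 := by
    intro x
    have h1 : eA.symm x < μ (2 * (eA.symm x + 1)) := by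
      have := hμgrow (eA.symm x + 1)
      omega
    have h2 := hμmem _ _ h1
    rw [Equiv.apply_symm_apply] at h2
    obtain ⟨p, hp, hp2⟩ := List.mem_map.1 h2
    refine ⟨(2 * (eA.symm x + 1), p.2), ?_⟩
    have : (x, p.2) = p := Prod.ext hp2.symm rfl
    rw [this]
    exact hp
  have htotB : ∀ y : Ω', ∃ q : ℕ × Ω, (q.2, y) ∈ Ls q.1 := by
    intro y
    have h1 : eB.symm y < ν (2 * eB.symm y + 1 + 1) := by
      have h5 := hνgrow (eB.symm y)
      have h6 : ν (2 * eB.symm y + 1) < ν (2 * eB.symm y + 1 + 1) := hνstep _ (by omega)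
      omega
    have h2 := hνmem _ _ h1
    rw [Equiv.apply_symm_apply] at h2
    obtain ⟨p, hp, hp2⟩ := List.mem_map.1 h2
    refine ⟨(2 * eB.symm y + 1 + 1, p.1), ?_⟩
    have : (p.1, y) = p := Prod.ext rfl hp2.symm
    rw [this]
    exact hp
  -- uniqueness
  have huniqF : ∀ {x : Ω} {y y' : Ω'} {n m : ℕ}, (x, y) ∈ Ls n → (x, y') ∈ Ls m → y = y' := by
    intro x y y' n m h1 h2
    have h1' : (x, y) ∈ Ls (max n m) := hmono _ _ _ (le_max_left n m) h1
    have h2' : (x, y') ∈ Ls (max n m) := hmono _ _ _ (le_max_right n m) h2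
    have hnd : ((Ls (max n m)).map Prod.fst).Nodup := (hInv (max n m)).fst_nodup hf
    have := List.inj_on_of_nodup_map hnd h1' h2' rfl
    exact congrArg Prod.snd this
  have huniqS : ∀ {x x' : Ω} {y : Ω'} {n m : ℕ}, (x, y) ∈ Ls n → (x', y) ∈ Ls m → x = x' := by
    intro x x' y n m h1 h2
    have h1' : (x, y) ∈ Ls (max n m) := hmono _ _ _ (le_max_left n m) h1
    have h2' : (x', y) ∈ Ls (max n m) := hmono _ _ _ (le_max_right n m) h2
    have hnd : ((Ls (max n m)).map Prod.snd).Nodup := (hInv (max n m)).1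
    have := List.inj_on_of_nodup_map hnd h1' h2' rfl
    exact congrArg Prod.fst this
  -- the bijection
  set F : Ω → Ω' := fun x => (htotA x).choose.2 with hFdef
  set Gm : Ω' → Ω := fun y => (htotB y).choose.2 with hGdef
  have hFspec : ∀ x, (x, F x) ∈ Ls (htotA x).choose.1 := fun x => (htotA x).choose_spec
  have hGspec : ∀ y, (Gm y, y) ∈ Ls (htotB y).choose.1 := fun y => (htotB y).choose_spec
  have hleft : Function.LeftInverse Gm F := by
    intro x
    exact huniqS (hGspec (F x)) (hFspec x)
  have hright : Function.RightInverse Gm F := by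
    intro y
    exact huniqF (hFspec (Gm y)) (hGspec y)
  refine ⟨⟨F, Gm, hleft, hright⟩, ?_⟩
  intro n x
  set ns : Fin n → ℕ := fun i => (htotA (x i)).choose.1 with hns
  set N : ℕ := Finset.univ.sup ns with hN
  have hmem : ∀ i, (x i, F (x i)) ∈ Ls N :=
    fun i => hmono _ _ _ (Finset.le_sup (Finset.mem_univ i)) (hFspec (x i))
  obtain ⟨_, β, hβ, hl⟩ := hInv N
  exact ⟨β, hβ, fun i => hl _ (hmem i)⟩

end OptPres


/-- Homomorphically equivalent, optimally presented reducts of homogeneous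
ω-categorical Ramsey structures (here: structures with the canonisation property)
in finite relational languages are isomorphic via a fo-bi-definition of the
ground structures. -/
theorem optimal_presentations_foBiDefinable
    {Ω Ω' : Type} [Countable Ω] [Infinite Ω] [Countable Ω'] [Infinite Ω']
    (L₁ L₂ τ : FirstOrder.Language) [L₁.IsRelational] [L₂.IsRelational] [τ.IsRelational]
    [Finite (Σ n : ℕ, L₁.Relations n)] [Finite (Σ n : ℕ, L₂.Relations n)]
    [L₁.Structure Ω] [L₂.Structure Ω']
    (hAhomog : Homog L₁ Ω) (hBhomog : Homog L₂ Ω')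
    (hAoligo : Oligo {g : Equiv.Perm Ω | IsAutPerm L₁ Ω g})
    (hBoligo : Oligo {g : Equiv.Perm Ω' | IsAutPerm L₂ Ω' g})
    -- canonisation property (a consequence of the Ramsey property): the closure of
    -- `{β ∘ f ∘ α | α ∈ Aut(A), β ∈ Aut(B)}` in the topology of pointwise convergence
    -- contains an (A,B)-canonical function, and symmetrically
    (hcanonAB : ∀ f : Ω → Ω', ∃ f' : Ω → Ω',
      f' ∈ @closure (Ω → Ω') (FnTop Ω Ω')
        {h | ∃ (α : Equiv.Perm Ω) (β : Equiv.Perm Ω'),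
          IsAutPerm L₁ Ω α ∧ IsAutPerm L₂ Ω' β ∧ h = ⇑β ∘ f ∘ ⇑α} ∧
      Canonical {g : Equiv.Perm Ω | IsAutPerm L₁ Ω g}
        {g : Equiv.Perm Ω' | IsAutPerm L₂ Ω' g} f')
    (hcanonBA : ∀ f : Ω' → Ω, ∃ f' : Ω' → Ω,
      f' ∈ @closure (Ω' → Ω) (FnTop Ω' Ω)
        {h | ∃ (α : Equiv.Perm Ω) (β : Equiv.Perm Ω'),
          IsAutPerm L₁ Ω α ∧ IsAutPerm L₂ Ω' β ∧ h = ⇑α ∘ f ∘ ⇑β} ∧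
      Canonical {g : Equiv.Perm Ω' | IsAutPerm L₂ Ω' g}
        {g : Equiv.Perm Ω | IsAutPerm L₁ Ω g} f')
    (SC : τ.Structure Ω) (SD : τ.Structure Ω')
    -- `C` is a first-order reduct of `A`, `D` of `B`
    (hCreduct : ∀ (m : ℕ) (R : τ.Relations m) (g : Equiv.Perm Ω), IsAutPerm L₁ Ω g →
      ∀ t : Fin m → Ω, relI SC R t → relI SC R (tAct g t))
    (hDreduct : ∀ (m : ℕ) (R : τ.Relations m) (g : Equiv.Perm Ω'), IsAutPerm L₂ Ω' g →
      ∀ t : Fin m → Ω', relI SD R t → relI SD R (tAct g t))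
    -- `C` is optimally presented over `A`: the range of every endomorphism of `C`
    -- meets every `Aut(A)`-orbit
    (hCopt : ∀ e : Ω → Ω,
      (∀ (m : ℕ) (R : τ.Relations m) (t : Fin m → Ω),
        relI SC R t → relI SC R (fun i => e (t i))) →
      ∀ (m : ℕ) (t : Fin m → Ω), ∃ s : Fin m → Ω,
        SameOrb {g : Equiv.Perm Ω | IsAutPerm L₁ Ω g} t (fun i => e (s i)))
    -- `D` is optimally presented over `B`
    (hDopt : ∀ e : Ω' → Ω',
      (∀ (m : ℕ) (R : τ.Relations m) (t : Fin m → Ω'),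
        relI SD R t → relI SD R (fun i => e (t i))) →
      ∀ (m : ℕ) (t : Fin m → Ω'), ∃ s : Fin m → Ω',
        SameOrb {g : Equiv.Perm Ω' | IsAutPerm L₂ Ω' g} t (fun i => e (s i)))
    -- `C` and `D` are homomorphically equivalent
    (hhom : ∃ h : Ω → Ω', ∀ (m : ℕ) (R : τ.Relations m) (t : Fin m → Ω),
      relI SC R t → relI SD R (fun i => h (t i)))
    (hhom' : ∃ h : Ω' → Ω, ∀ (m : ℕ) (R : τ.Relations m) (t : Fin m → Ω'),
      relI SD R t → relI SC R (fun i => h (t i))) :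
    -- conclusion: some isomorphism `C → D` is a fo-bi-definition of `A` and `B`
    ∃ θ : Ω ≃ Ω',
      (∀ (m : ℕ) (R : τ.Relations m) (t : Fin m → Ω),
        relI SC R t ↔ relI SD R (fun i => θ (t i))) ∧
      (∀ (n : ℕ) (s : Set (Fin n → Ω)),
        FoDef L₁ Ω s → FoDef L₂ Ω' ((fun t => ⇑θ ∘ t) '' s)) ∧
      (∀ (n : ℕ) (s : Set (Fin n → Ω')),
        FoDef L₂ Ω' s → FoDef L₁ Ω ((fun t => ⇑θ.symm ∘ t) '' s)) := by
  classical
  obtain ⟨h, hh⟩ := hhom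
  obtain ⟨h', hh'⟩ := hhom'
  obtain ⟨f', hf'cl, hf'can⟩ := hcanonAB h
  obtain ⟨g', hg'cl, hg'can⟩ := hcanonBA h'
  set GA := autGroup L₁ Ω with hGA
  set GB := autGroup L₂ Ω' with hGB
  -- f' is a homomorphism C → D
  have hf'hom : ∀ (m : ℕ) (R : τ.Relations m) (t : Fin m → Ω),
      relI SC R t → relI SD R (fun i => f' (t i)) := by
    intro m R t ht
    obtain ⟨h0, hS, happ⟩ := OptPres.closure_approx hf'cl m t
    obtain ⟨α, β, hα, hβ, rfl⟩ := hS
    have h1 : relI SC R (tAct α t) := hCreduct m R α hα t ht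
    have h2 : relI SD R (fun i => h (tAct α t i)) := hh m R (tAct α t) h1
    have h3 : relI SD R (tAct β (fun i => h (tAct α t i))) := hDreduct m R β hβ _ h2
    have h4 : (fun i => f' (t i)) = tAct β (fun i => h (tAct α t i)) := by
      funext i
      rw [← happ i]
      rfl
    rw [h4]
    exact h3
  -- g' is a homomorphism D → C
  have hg'hom : ∀ (m : ℕ) (R : τ.Relations m) (t : Fin m → Ω'),
      relI SD R t → relI SC R (fun i => g' (t i)) := by
    intro m R t ht
    obtain ⟨h0, hS, happ⟩ := OptPres.closure_approx hg'cl m t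
    obtain ⟨α, β, hα, hβ, rfl⟩ := hS
    have h1 : relI SD R (tAct β t) := hDreduct m R β hβ t ht
    have h2 : relI SC R (fun i => h' (tAct β t i)) := hh' m R (tAct β t) h1
    have h3 : relI SC R (tAct α (fun i => h' (tAct β t i))) := hCreduct m R α hα _ h2
    have h4 : (fun i => g' (t i)) = tAct α (fun i => h' (tAct β t i)) := by
      funext i
      rw [← happ i]
      rfl
    rw [h4]
    exact h3
  -- the endomorphisms
  set e : Ω → Ω := fun x => g' (f' x) with he
  set e2 : Ω' → Ω' := fun y => f' (g' y) with he2
  have hehom : ∀ (m : ℕ) (R : τ.Relations m) (t : Fin m → Ω),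
      relI SC R t → relI SC R (fun i => e (t i)) :=
    fun m R t ht => hg'hom m R (fun i => f' (t i)) (hf'hom m R t ht)
  have he2hom : ∀ (m : ℕ) (R : τ.Relations m) (t : Fin m → Ω'),
      relI SD R t → relI SD R (fun i => e2 (t i)) :=
    fun m R t ht => hf'hom m R (fun i => g' (t i)) (hg'hom m R t ht)
  have hecan : ∀ (m : ℕ) (t s : Fin m → Ω), SameOrb (GA : Set _) t s →
      SameOrb (GA : Set _) (fun i => e (t i)) (fun i => e (s i)) :=
    fun m t s hts => hg'can m _ _ (hf'can m t s hts)
  have he2can : ∀ (m : ℕ) (t s : Fin m → Ω'), SameOrb (GB : Set _) t s →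
      SameOrb (GB : Set _) (fun i => e2 (t i)) (fun i => e2 (s i)) :=
    fun m t s hts => hf'can m _ _ (hg'can m t s hts)
  -- counting
  have hcountA := fun m : ℕ =>
    OptPres.orbit_counting GA (hAoligo m) (fun t : Fin m → Ω => fun i => e (t i))
      (hecan m) (hCopt e hehom m)
  have hcountB := fun m : ℕ =>
    OptPres.orbit_counting GB (hBoligo m) (fun t : Fin m → Ω' => fun i => e2 (t i))
      (he2can m) (hDopt e2 he2hom m)
  -- injectivity of e, f', e2, g'
  have heinj : Function.Injective e := by
    intro x y hxy
    have hEeq : (fun i : Fin 2 => e ((![x, y]) i)) = (fun i : Fin 2 => e ((![x, x]) i)) := by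
      funext i
      fin_cases i <;> simp [hxy]
    have h2 : SameOrb (GA : Set _) (![x, y]) (![x, x]) := by
      apply (hcountA 2).1
      rw [hEeq]
      exact OptPres.sameOrb_refl GA _
    obtain ⟨g, hg, hgeq⟩ := h2
    have e0 : x = g x := by
      have := congrFun hgeq 0
      simpa [tAct] using this
    have e1 : x = g y := by
      have := congrFun hgeq 1
      simpa [tAct] using this
    exact g.injective (e0 ▸ e1.symm ▸ rfl : g x = g y)
  have he2inj : Function.Injective e2 := by
    intro x y hxy
    have hEeq : (fun i : Fin 2 => e2 ((![x, y]) i)) = (fun i : Fin 2 => e2 ((![x, x]) i)) := by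
      funext i
      fin_cases i <;> simp [hxy]
    have h2 : SameOrb (GB : Set _) (![x, y]) (![x, x]) := by
      apply (hcountB 2).1
      rw [hEeq]
      exact OptPres.sameOrb_refl GB _
    obtain ⟨g, hg, hgeq⟩ := h2
    have e0 : x = g x := by
      have := congrFun hgeq 0
      simpa [tAct] using this
    have e1 : x = g y := by
      have := congrFun hgeq 1
      simpa [tAct] using this
    exact g.injective (e0 ▸ e1.symm ▸ rfl : g x = g y)
  have hf'inj : Function.Injective f' := fun x y hxy => heinj (congrArg g' hxy)
  have hg'inj : Function.Injective g' := fun x y hxy => he2inj (congrArg f' hxy)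
  -- f' reflects relations
  have hf'refl : ∀ (m : ℕ) (R : τ.Relations m) (t : Fin m → Ω),
      relI SD R (fun i => f' (t i)) → relI SC R t := by
    intro m R t hDt
    have h1 : relI SC R (fun i => e (t i)) := hg'hom m R _ hDt
    refine (hcountA m).2 (relI SC R) ?_ ?_ t h1
    · rintro t' s' ⟨g, hg, rfl⟩ ht'
      exact hCreduct m R g hg t' ht'
    · exact fun t' ht' => hehom m R t' ht'
  -- f' reflects orbits
  have hf'orb : ∀ (m : ℕ) (t s : Fin m → Ω), SameOrb (GA : Set _) t s ↔
      SameOrb (GB : Set _) (fun i => f' (t i)) (fun i => f' (s i)) := by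
    intro m t s
    constructor
    · exact hf'can m t s
    · intro hB
      exact (hcountA m).1 t s (hg'can m _ _ hB)
  -- the extension property
  have hext : ∀ (n : ℕ) (x : Fin n → Ω) (b : Ω'), ∃ (a : Ω) (γ : Equiv.Perm Ω'), γ ∈ GB ∧
      (∀ i, γ (f' (x i)) = f' (x i)) ∧ γ b = f' a := by
    intro n x b
    set w : Fin (n + 1) → Ω' := Fin.snoc (fun i => f' (x i)) b with hwdef
    obtain ⟨s', hs'⟩ := hDopt e2 he2hom (n + 1) w
    set u : Fin (n + 1) → Ω := fun i => g' (s' i) with hudef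
    have hwu : SameOrb (GB : Set _) w (fun i => f' (u i)) := hs'
    obtain ⟨β, hβ, hβeq⟩ := hwu
    have hrest : SameOrb (GB : Set _) (fun i : Fin n => f' (x i))
        (fun i : Fin n => f' (u i.castSucc)) := by
      refine ⟨β, hβ, ?_⟩
      funext i
      have h1 := congrFun hβeq i.castSucc
      have h2 : w i.castSucc = f' (x i) := Fin.snoc_castSucc _ _ _
      show f' (u i.castSucc) = β (f' (x i))
      rw [← h2]
      exact h1
    have hxu : SameOrb (GA : Set _) x (fun i => u i.castSucc) := (hf'orb n _ _).2 hrest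
    obtain ⟨δ0, hδ0, hδ0eq⟩ := OptPres.sameOrb_symm GA hxu
    set a : Ω := δ0 (u (Fin.last n)) with hadef
    set xa : Fin (n + 1) → Ω := Fin.snoc x a with hxadef
    have hsnoc : xa = tAct δ0 u := by
      funext i
      rw [hxadef]
      refine Fin.lastCases ?_ ?_ i
      · rw [Fin.snoc_last]
        rfl
      · intro j
        rw [Fin.snoc_castSucc]
        exact congrFun hδ0eq j
    have hcan2 : SameOrb (GB : Set _) (fun i => f' (u i)) (fun i => f' (xa i)) :=
      hf'can (n + 1) u xa ⟨δ0, hδ0, hsnoc⟩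
    obtain ⟨γ0, hγ0, hγ0eq⟩ := hcan2
    refine ⟨a, γ0 * β, GB.mul_mem hγ0 hβ, ?_, ?_⟩
    · intro i
      have h1 := congrFun hγ0eq i.castSucc
      have h2 := congrFun hβeq i.castSucc
      have h3 : w i.castSucc = f' (x i) := Fin.snoc_castSucc _ _ _
      have h4 : xa i.castSucc = x i := by rw [hxadef]; exact Fin.snoc_castSucc _ _ _
      show γ0 (β (f' (x i))) = f' (x i)
      rw [← h3]
      have h5 : β (w i.castSucc) = f' (u i.castSucc) := (h2).symm
      rw [h5]
      have h6 : γ0 (f' (u i.castSucc)) = f' (xa i.castSucc) := (h1).symm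
      rw [h6, h4, h3]
    · have h1 := congrFun hγ0eq (Fin.last n)
      have h2 := congrFun hβeq (Fin.last n)
      have h3 : w (Fin.last n) = b := Fin.snoc_last _ _
      have h4 : xa (Fin.last n) = a := by rw [hxadef]; exact Fin.snoc_last _ _
      show γ0 (β b) = f' a
      rw [← h3]
      have h5 : β (w (Fin.last n)) = f' (u (Fin.last n)) := (h2).symm
      rw [h5]
      have h6 : γ0 (f' (u (Fin.last n))) = f' (xa (Fin.last n)) := (h1).symm
      rw [h6, h4]
  -- the bijection
  obtain ⟨θ, hθ⟩ := OptPres.back_and_forth GB f' hf'inj hext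
  -- orbit equivalence for θ
  have hθorb : ∀ (m : ℕ) (u v : Fin m → Ω), SameOrb (GA : Set _) u v ↔
      SameOrb (GB : Set _) (fun i => θ (u i)) (fun i => θ (v i)) := by
    intro m u v
    obtain ⟨β, hβ, hβeq⟩ := hθ (m + m) (Fin.append u v)
    have hu : ∀ i, θ (u i) = β (f' (u i)) := by
      intro i
      have := hβeq (Fin.castAdd m i)
      rwa [Fin.append_left] at this
    have hv : ∀ i, θ (v i) = β (f' (v i)) := by
      intro i
      have := hβeq (Fin.natAdd m i)
      rwa [Fin.append_right] at this
    constructor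
    · intro hA
      obtain ⟨δ, hδ, hδeq⟩ := (hf'orb m u v).1 hA
      refine ⟨β * δ * β⁻¹, GB.mul_mem (GB.mul_mem hβ hδ) (GB.inv_mem hβ), ?_⟩
      funext i
      show θ (v i) = β (δ (β⁻¹ (θ (u i))))
      rw [hu i, hv i, Equiv.Perm.inv_def, Equiv.symm_apply_apply]
      exact congrArg β (congrFun hδeq i)
    · intro hB
      obtain ⟨δ, hδ, hδeq⟩ := hB
      apply (hf'orb m u v).2
      refine ⟨β⁻¹ * δ * β, GB.mul_mem (GB.mul_mem (GB.inv_mem hβ) hδ) hβ, ?_⟩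
      funext i
      show f' (v i) = β⁻¹ (δ (β (f' (u i))))
      rw [← hu i]
      have h1 : θ (v i) = δ (θ (u i)) := congrFun hδeq i
      rw [← h1, hv i, Equiv.Perm.inv_def, Equiv.symm_apply_apply]
  refine ⟨θ, ?_, ?_, ?_⟩
  · -- θ is an isomorphism C → D
    intro m R t
    obtain ⟨β, hβ, hβeq⟩ := hθ m t
    have hteq : (fun i => θ (t i)) = tAct β (fun i => f' (t i)) := funext fun i => hβeq i
    constructor
    · intro ht
      rw [hteq]
      exact hDreduct m R β hβ _ (hf'hom m R t ht)
    · intro ht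
      rw [hteq] at ht
      have h1 : relI SD R (tAct β⁻¹ (tAct β (fun i => f' (t i)))) :=
        hDreduct m R β⁻¹ (GB.inv_mem hβ) _ ht
      have h2 : tAct β⁻¹ (tAct β (fun i => f' (t i))) = (fun i => f' (t i)) := by
        funext i
        simp [tAct]
      rw [h2] at h1
      exact hf'refl m R t h1
  · -- forward definability transport
    intro n s hs
    obtain ⟨φ, rfl⟩ := hs
    have hsinv : ∀ u ∈ {t | Formula.Realize φ t}, ∀ g : Equiv.Perm Ω, IsAutPerm L₁ Ω g →
        tAct g u ∈ {t | Formula.Realize φ t} := by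
      intro u hu g hg
      exact (OptPres.realize_comp_aut hg φ u).2 hu
    apply OptPres.invariant_foDef hBhomog hBoligo
    rintro _ ⟨u, hu, rfl⟩ δ hδ
    set w : Fin n → Ω := fun i => θ.symm (δ (θ (u i))) with hwdef
    have hθw : (fun i => θ (w i)) = tAct δ (fun i => θ (u i)) := by
      funext i
      show θ (θ.symm (δ (θ (u i)))) = δ (θ (u i))
      exact θ.apply_symm_apply _
    have hBorb : SameOrb (GB : Set _) (fun i => θ (u i)) (fun i => θ (w i)) := ⟨δ, hδ, hθw⟩
    have hAorb : SameOrb (GA : Set _) u w := (hθorb n u w).2 hBorb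
    obtain ⟨α, hα, hαeq⟩ := hAorb
    have hws : w ∈ {t | Formula.Realize φ t} := by
      rw [hαeq]
      exact hsinv u hu α hα
    refine ⟨w, hws, ?_⟩
    funext i
    exact (congrFun hθw i)
  · -- backward definability transport
    intro n s hs
    obtain ⟨φ, rfl⟩ := hs
    have hsinv : ∀ u ∈ {t | Formula.Realize φ t}, ∀ g : Equiv.Perm Ω', IsAutPerm L₂ Ω' g →
        tAct g u ∈ {t | Formula.Realize φ t} := by
      intro u hu g hg
      exact (OptPres.realize_comp_aut hg φ u).2 hu
    apply OptPres.invariant_foDef hAhomog hAoligo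
    rintro _ ⟨v, hv, rfl⟩ α hα
    set u : Fin n → Ω := fun i => θ.symm (v i) with hudef
    have hAorb : SameOrb (GA : Set _) u (tAct α u) := ⟨α, hα, rfl⟩
    have hBorb := (hθorb n u (tAct α u)).1 hAorb
    have hθu : (fun i => θ (u i)) = v := by
      funext i
      exact θ.apply_symm_apply _
    rw [hθu] at hBorb
    obtain ⟨δ, hδ, hδeq⟩ := hBorb
    have hv2 : (fun i => θ (tAct α u i)) ∈ {t | Formula.Realize φ t} := by
      rw [hδeq]
      exact hsinv v hv δ hδ
    refine ⟨(fun i => θ (tAct α u i)), hv2, ?_⟩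
    funext i
    show θ.symm (θ (tAct α u i)) = α (θ.symm (v i))
    rw [θ.symm_apply_apply]
    rfl
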